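/- arXiv:1503.06459 — 2 statements merged into one kernel-verified Lean document; each statement's English description precedes it below -/
import Mathlib

section
/- Strict sub-solution comparison: under the assumptions above, if additionally H(∇φ(x),x) ≤ -δ|x-ξ|² on U for some δ > 0 and ξ ∈ U, then for any C¹ curve η: [0,t] → U with η(0) = x, η(t) = ξ, one has φ(x) - φ(ξ) ≤ ∫_0^t L(-η̇(s),η(s)) ds - δ∫_0^t |η(s) - ξ|² ds. -/
open scoped Matrix

lemma quad_ineq {N : ℕ} (A : Matrix (Fin N) (Fin N) ℝ) (hA : A.IsSymm) (hpd : A.PosDef)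
    (p w : Fin N → ℝ) :
    p ⬝ᵥ w ≤ (A *ᵥ p) ⬝ᵥ p + (1/4) * ((A⁻¹ *ᵥ w) ⬝ᵥ w) := by
  have hdet : IsUnit A.det := hpd.det_pos.ne'.isUnit
  have hAinv : A *ᵥ (A⁻¹ *ᵥ w) = w := by
    rw [Matrix.mulVec_mulVec, Matrix.mul_nonsing_inv _ hdet, Matrix.one_mulVec]
  set q : Fin N → ℝ := p - (1/2 : ℝ) • (A⁻¹ *ᵥ w) with hq
  have h0 : 0 ≤ q ⬝ᵥ (A *ᵥ q) := by
    simpa using hpd.posSemidef.dotProduct_mulVec_nonneg q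
  have hAq : A *ᵥ q = A *ᵥ p - (1/2 : ℝ) • w := by
    rw [hq, Matrix.mulVec_sub, Matrix.mulVec_smul, hAinv]
  have hsymdot : (A⁻¹ *ᵥ w) ⬝ᵥ (A *ᵥ p) = p ⬝ᵥ w := by
    rw [Matrix.dotProduct_mulVec, ← Matrix.mulVec_transpose, hA.eq, hAinv, dotProduct_comm]
  have hexp : q ⬝ᵥ (A *ᵥ q)
      = (A *ᵥ p) ⬝ᵥ p - p ⬝ᵥ w + (1/4) * ((A⁻¹ *ᵥ w) ⬝ᵥ w) := by
    rw [hAq, hq]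
    rw [sub_dotProduct, dotProduct_sub, dotProduct_sub,
      smul_dotProduct, smul_dotProduct, dotProduct_smul,
      dotProduct_smul, hsymdot, dotProduct_comm p (A *ᵥ p)]
    simp only [smul_eq_mul]
    ring
  linarith [h0, hexp.symm.le]

lemma clm_eq_dot {N : ℕ} (ℓ : (Fin N → ℝ) →L[ℝ] ℝ) (v : Fin N → ℝ) :
    ℓ v = (fun i => ℓ (Pi.single i 1)) ⬝ᵥ v := by
  have hv : v = ∑ i, v i • (Pi.single i 1 : Fin N → ℝ) := by
    funext j
    simp [Pi.single_apply, Finset.sum_apply]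
  conv_lhs => rw [hv]
  rw [map_sum]
  simp [dotProduct, mul_comm]


lemma contOn_dot {X : Type*} [TopologicalSpace X] {N : ℕ} {f g : X → (Fin N → ℝ)} {s : Set X}
    (hf : ContinuousOn f s) (hg : ContinuousOn g s) :
    ContinuousOn (fun x => f x ⬝ᵥ g x) s := by
  simp only [dotProduct]
  exact continuousOn_finset_sum _ fun i _ =>
    ((continuous_apply i).comp_continuousOn hf).mul ((continuous_apply i).comp_continuousOn hg)

lemma contOn_mulVec {X : Type*} [TopologicalSpace X] {N : ℕ}
    {A : X → Matrix (Fin N) (Fin N) ℝ} {v : X → (Fin N → ℝ)} {s : Set X}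
    (hA : ContinuousOn A s) (hv : ContinuousOn v s) :
    ContinuousOn (fun x => A x *ᵥ v x) s := by
  apply continuousOn_pi.2
  intro i
  exact contOn_dot ((continuous_apply i).comp_continuousOn hA) hv

set_option maxHeartbeats 1000000 in
/-- Strict sub-solution comparison: if `φ ∈ C¹` satisfies `H(∇φ(x),x) ≤ -δ|x-ξ|²` on an open
set `U` (with `H(p,x) = a(x)p·p - b(x)·p`, `a(x)` symmetric positive definite, `δ > 0`,
`ξ ∈ U`), then for any `C¹` curve `η : [0,t] → U` with `η(0) = x`, `η(t) = ξ`,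
`φ(x) - φ(ξ) ≤ ∫_0^t L(-η̇(s), η(s)) ds - δ∫_0^t |η(s)-ξ|² ds`. -/
theorem strict_subsolution_comparison
    (N : ℕ) (U : Set (Fin N → ℝ)) (hU : IsOpen U)
    (a : (Fin N → ℝ) → Matrix (Fin N) (Fin N) ℝ) (b : (Fin N → ℝ) → (Fin N → ℝ))
    (ha : ∀ i j, ContinuousOn (fun x => a x i j) U)
    (hasym : ∀ x ∈ U, (a x).IsSymm) (hapd : ∀ x ∈ U, (a x).PosDef)
    (hb : ∀ i, ContinuousOn (fun x => b x i) U)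
    (φ : (Fin N → ℝ) → ℝ) (hφ : ContDiffOn ℝ 1 φ U)
    (δ : ℝ) (hδ : 0 < δ) (ξ : Fin N → ℝ) (hξ : ξ ∈ U)
    (hsub : ∀ x ∈ U,
      (a x *ᵥ (fun i => fderiv ℝ φ x (Pi.single i 1)))
          ⬝ᵥ (fun i => fderiv ℝ φ x (Pi.single i 1))
        - b x ⬝ᵥ (fun i => fderiv ℝ φ x (Pi.single i 1))
        ≤ -δ * ((x - ξ) ⬝ᵥ (x - ξ)))
    (t : ℝ) (ht : 0 ≤ t) (η : ℝ → (Fin N → ℝ)) (hη : ContDiff ℝ 1 η)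
    (hηU : ∀ s ∈ Set.Icc (0 : ℝ) t, η s ∈ U)
    (x : Fin N → ℝ) (hx : η 0 = x) (hend : η t = ξ) :
    φ x - φ ξ ≤ (∫ s in (0 : ℝ)..t,
        (1 / 4) * (((a (η s))⁻¹ *ᵥ (-(deriv η s) + b (η s))) ⬝ᵥ (-(deriv η s) + b (η s))))
      - δ * ∫ s in (0 : ℝ)..t, (η s - ξ) ⬝ᵥ (η s - ξ) := by
  have hIcc : Set.uIcc (0:ℝ) t = Set.Icc 0 t := Set.uIcc_of_le ht
  have hηc : Continuous η := hη.continuous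
  have hdc : Continuous (deriv η) := hη.continuous_deriv le_rfl
  have hmaps : Set.MapsTo η (Set.Icc (0:ℝ) t) U := hηU
  -- FTC for φ ∘ η
  have hg : ∀ s ∈ Set.Icc (0:ℝ) t,
      HasDerivAt (fun s => φ (η s)) (fderiv ℝ φ (η s) (deriv η s)) s := by
    intro s hs
    have hφd : DifferentiableAt ℝ φ (η s) :=
      (hφ.differentiableOn one_ne_zero).differentiableAt (hU.mem_nhds (hηU s hs))
    exact hφd.hasFDerivAt.comp_hasDerivAt s ((hη.differentiable one_ne_zero) s).hasDerivAt
  have hfc : ContinuousOn (fun y => fderiv ℝ φ y) U :=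
    hφ.continuousOn_fderiv_of_isOpen hU le_rfl
  have hgc : ContinuousOn (fun s => fderiv ℝ φ (η s) (deriv η s)) (Set.Icc (0:ℝ) t) :=
    (hfc.comp hηc.continuousOn hmaps).clm_apply hdc.continuousOn
  have hgint : IntervalIntegrable (fun s => fderiv ℝ φ (η s) (deriv η s))
      MeasureTheory.volume 0 t := (hIcc ▸ hgc).intervalIntegrable
  have hFTC : ∫ s in (0:ℝ)..t, fderiv ℝ φ (η s) (deriv η s) = φ (η t) - φ (η 0) :=
    intervalIntegral.integral_eq_sub_of_hasDerivAt (fun s hs => hg s (hIcc ▸ hs)) hgint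
  -- continuity of the right-hand side integrands
  have haη : ContinuousOn (fun s => a (η s)) (Set.Icc (0:ℝ) t) := by
    apply continuousOn_pi.2; intro i; apply continuousOn_pi.2; intro j
    exact (ha i j).comp hηc.continuousOn hmaps
  have hdetne : ∀ s ∈ Set.Icc (0:ℝ) t, (a (η s)).det ≠ 0 := fun s hs =>
    ((hapd _ (hηU s hs)).det_pos).ne'
  have hinvc : ContinuousOn (fun s => (a (η s))⁻¹) (Set.Icc (0:ℝ) t) := by
    simp only [Matrix.inv_def, Ring.inverse_eq_inv]
    exact (((continuous_id.matrix_det).comp_continuousOn haη).inv₀ hdetne).smul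
      ((continuous_id.matrix_adjugate).comp_continuousOn haη)
  have hbc : ContinuousOn (fun s => b (η s)) (Set.Icc (0:ℝ) t) := by
    apply continuousOn_pi.2; intro i
    exact (hb i).comp hηc.continuousOn hmaps
  have hwc : ContinuousOn (fun s => -(deriv η s) + b (η s)) (Set.Icc (0:ℝ) t) :=
    hdc.continuousOn.neg.add hbc
  set F : ℝ → ℝ := fun s =>
    (1 / 4) * (((a (η s))⁻¹ *ᵥ (-(deriv η s) + b (η s))) ⬝ᵥ (-(deriv η s) + b (η s))) with hF
  set G : ℝ → ℝ := fun s => (η s - ξ) ⬝ᵥ (η s - ξ) with hG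
  have hFc : ContinuousOn F (Set.Icc (0:ℝ) t) :=
    continuousOn_const.mul (contOn_dot (contOn_mulVec hinvc hwc) hwc)
  have hGc : ContinuousOn G (Set.Icc (0:ℝ) t) :=
    contOn_dot (hηc.sub continuous_const).continuousOn (hηc.sub continuous_const).continuousOn
  have hFint : IntervalIntegrable F MeasureTheory.volume 0 t := (hIcc ▸ hFc).intervalIntegrable
  have hGint : IntervalIntegrable G MeasureTheory.volume 0 t := (hIcc ▸ hGc).intervalIntegrable
  -- pointwise bound
  have key : ∀ s ∈ Set.Icc (0:ℝ) t,
      -(fderiv ℝ φ (η s) (deriv η s)) ≤ F s - δ * G s := by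
    intro s hs
    have hUs := hηU s hs
    set p : Fin N → ℝ := fun i => fderiv ℝ φ (η s) (Pi.single i 1) with hp
    set w : Fin N → ℝ := -(deriv η s) + b (η s) with hw
    have h1 : fderiv ℝ φ (η s) (deriv η s) = p ⬝ᵥ deriv η s :=
      clm_eq_dot (fderiv ℝ φ (η s)) (deriv η s)
    have h2 : p ⬝ᵥ w ≤ (a (η s) *ᵥ p) ⬝ᵥ p
        + (1/4) * (((a (η s))⁻¹ *ᵥ w) ⬝ᵥ w) :=
      quad_ineq (a (η s)) (hasym _ hUs) (hapd _ hUs) p w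
    have h3 := hsub (η s) hUs
    have h4 : p ⬝ᵥ w = -(p ⬝ᵥ deriv η s) + p ⬝ᵥ b (η s) := by
      rw [hw, dotProduct_add, dotProduct_neg]
    have h5 : b (η s) ⬝ᵥ p = p ⬝ᵥ b (η s) := dotProduct_comm _ _
    rw [h1, hF, hG]
    simp only [← hp, ← hw] at h2 h3 ⊢
    rw [h5] at h3
    linarith
  -- combine
  have hmono : ∫ s in (0:ℝ)..t, -(fderiv ℝ φ (η s) (deriv η s))
      ≤ ∫ s in (0:ℝ)..t, (F s - δ * G s) :=
    intervalIntegral.integral_mono_on ht hgint.neg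
      (hFint.sub (hGint.const_mul δ)) key
  have hsplit : ∫ s in (0:ℝ)..t, (F s - δ * G s)
      = (∫ s in (0:ℝ)..t, F s) - δ * ∫ s in (0:ℝ)..t, G s := by
    rw [intervalIntegral.integral_sub hFint (hGint.const_mul δ),
      show (∫ s in (0:ℝ)..t, δ * G s) = δ * ∫ s in (0:ℝ)..t, G s from
        intervalIntegral.integral_const_mul δ G]
  have hneg : ∫ s in (0:ℝ)..t, -(fderiv ℝ φ (η s) (deriv η s))
      = φ x - φ ξ := by
    rw [intervalIntegral.integral_neg, hFTC, hx, hend]; ring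
  calc φ x - φ ξ = _ := hneg.symm
    _ ≤ _ := hmono
    _ = _ := hsplit
end

section
/- Let Γ̄(t), D̄(t) be P-periodic symmetric matrix-valued C¹ functions with D̄(t) ≥ cI > 0, satisfying the periodic Riccati equation Γ̄' = 4Γ̄Q̄Γ̄ - Γ̄B̄ - B̄*Γ̄ and the periodic Lyapunov equation D̄' + D̄(B̄ - 4Q̄Γ̄) + (B̄ - 4Q̄Γ̄)*D̄ = -2I, where Q̄(t) is symmetric. Then for all sufficiently small δ > 0 the matrices Γ̄⁺_δ := Γ̄ + δD̄ and Γ̄⁻_δ := Γ̄ - δD̄ satisfy, for all t, 4Γ̄⁺_δ Q̄ Γ̄⁺_δ - (Γ̄⁺_δ)' - Γ̄⁺_δ B̄ - B̄*Γ̄⁺_δ ≥ δI and 4Γ̄⁻_δ Q̄ Γ̄⁻_δ - (Γ̄⁻_δ)' - Γ̄⁻_δ B̄ - B̄*Γ̄⁻_δ ≤ -δI. -/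
open scoped Matrix


private lemma psd_aux {n : ℕ} (A : Matrix (Fin n) (Fin n) ℝ) (hA : Aᵀ = A)
    (h : ∀ x : Fin n → ℝ, 0 ≤ x ⬝ᵥ A *ᵥ x) : A.PosSemidef := by
  refine Matrix.PosSemidef.of_dotProduct_mulVec_nonneg ?_ fun x => ?_
  · ext i j
    rw [Matrix.conjTranspose_apply, star_trivial]
    exact congrFun (congrFun hA i) j
  · simpa using h x

private lemma quad_bound {n : ℕ} (A : Matrix (Fin n) (Fin n) ℝ) (x : Fin n → ℝ) :
    |x ⬝ᵥ A *ᵥ x| ≤ (∑ i, ∑ j, |A i j|) * (x ⬝ᵥ x) := by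
  have hS : ∀ i, x i * x i ≤ x ⬝ᵥ x := by
    intro i
    exact Finset.single_le_sum (fun j _ => mul_self_nonneg (x j)) (Finset.mem_univ i)
  have hxy : ∀ i j, |x i| * |x j| ≤ x ⬝ᵥ x := by
    intro i j
    nlinarith [hS i, hS j, abs_nonneg (x i), abs_nonneg (x j), abs_mul_abs_self (x i),
      abs_mul_abs_self (x j), sq_nonneg (|x i| - |x j|)]
  calc |x ⬝ᵥ A *ᵥ x| = |∑ i, ∑ j, x i * (A i j * x j)| := by
        simp [dotProduct, Matrix.mulVec, Finset.mul_sum]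
    _ ≤ ∑ i, ∑ j, |x i * (A i j * x j)| :=
        (Finset.abs_sum_le_sum_abs _ _).trans
          (Finset.sum_le_sum fun i _ => Finset.abs_sum_le_sum_abs _ _)
    _ ≤ ∑ i, ∑ j, |A i j| * (x ⬝ᵥ x) := by
        refine Finset.sum_le_sum fun i _ => Finset.sum_le_sum fun j _ => ?_
        have : |x i * (A i j * x j)| = |A i j| * (|x i| * |x j|) := by
          rw [abs_mul, abs_mul]; ring
        rw [this]
        exact mul_le_mul_of_nonneg_left (hxy i j) (abs_nonneg _)
    _ = (∑ i, ∑ j, |A i j|) * (x ⬝ᵥ x) := by simp [Finset.sum_mul]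

private lemma riccati_expand {n : ℕ} (Q B G D G' D' : Matrix (Fin n) (Fin n) ℝ)
    (hQ : Qᵀ = Q) (hG : Gᵀ = G)
    (hG' : G' = 4 • (G * Q * G) - G * B - Bᵀ * G)
    (hL : D' + D * (B - 4 • (Q * G)) + (B - 4 • (Q * G))ᵀ * D
      = -(2 • (1 : Matrix (Fin n) (Fin n) ℝ))) (δ : ℝ) :
    ((4 • ((G + δ • D) * Q * (G + δ • D)) - (G' + δ • D')
      - (G + δ • D) * B - Bᵀ * (G + δ • D)) - δ • (1 : Matrix (Fin n) (Fin n) ℝ)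
      = δ • (1 : Matrix (Fin n) (Fin n) ℝ) + (4 * δ^2) • (D * Q * D))
    ∧ ((-δ) • (1 : Matrix (Fin n) (Fin n) ℝ)
      - (4 • ((G - δ • D) * Q * (G - δ • D)) - (G' - δ • D')
        - (G - δ • D) * B - Bᵀ * (G - δ • D))
      = δ • (1 : Matrix (Fin n) (Fin n) ℝ) - (4 * δ^2) • (D * Q * D)) := by
  have hD' : D' = -(2 • (1 : Matrix (Fin n) (Fin n) ℝ))
      - D * (B - 4 • (Q * G)) - (B - 4 • (Q * G))ᵀ * D := by
    rw [← hL]; abel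
  subst hG' hD'
  constructor <;>
  · simp only [Matrix.transpose_sub, Matrix.transpose_smul, Matrix.transpose_mul, hQ, hG,
      Matrix.mul_add, Matrix.add_mul, Matrix.mul_sub, Matrix.sub_mul,
      Matrix.smul_mul, Matrix.mul_smul, smul_add, smul_sub, smul_smul, Matrix.mul_one,
      Matrix.one_mul, Matrix.mul_assoc]
    module

/-- Periodic Riccati perturbation: if the `P`-periodic symmetric matrix functions `Γ̄`, `D̄`
(`D̄ ≥ cI > 0`) satisfy the periodic Riccati equation `Γ̄' = 4Γ̄Q̄Γ̄ - Γ̄B̄ - B̄*Γ̄` and the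
periodic Lyapunov equation `D̄' + D̄(B̄ - 4Q̄Γ̄) + (B̄ - 4Q̄Γ̄)*D̄ = -2I`, then for all
sufficiently small `δ > 0` the matrices `Γ̄±δD̄` satisfy for all `t`:
`4(Γ̄+δD̄)Q̄(Γ̄+δD̄) - (Γ̄+δD̄)' - (Γ̄+δD̄)B̄ - B̄*(Γ̄+δD̄) ≥ δI` and
`4(Γ̄-δD̄)Q̄(Γ̄-δD̄) - (Γ̄-δD̄)' - (Γ̄-δD̄)B̄ - B̄*(Γ̄-δD̄) ≤ -δI`. -/
theorem periodic_riccati_perturbation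
    (n : ℕ) (P : ℝ) (hP : 0 < P)
    (Qb Bb Γ Γ' D D' : ℝ → Matrix (Fin n) (Fin n) ℝ)
    (hQcont : ∀ i j, Continuous fun t => Qb t i j)
    (hBcont : ∀ i j, Continuous fun t => Bb t i j)
    (hQper : Function.Periodic Qb P) (hBper : Function.Periodic Bb P)
    (hQsym : ∀ t, (Qb t).IsSymm)
    (hΓsym : ∀ t, (Γ t).IsSymm) (hDsym : ∀ t, (D t).IsSymm)
    (hΓper : Function.Periodic Γ P) (hDper : Function.Periodic D P)
    (hΓderiv : ∀ t i j, HasDerivAt (fun s => Γ s i j) (Γ' t i j) t)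
    (hDderiv : ∀ t i j, HasDerivAt (fun s => D s i j) (D' t i j) t)
    (hΓ'cont : ∀ i j, Continuous fun t => Γ' t i j)
    (hD'cont : ∀ i j, Continuous fun t => D' t i j)
    (c : ℝ) (hc : 0 < c)
    (hDlower : ∀ t, (D t - c • (1 : Matrix (Fin n) (Fin n) ℝ)).PosSemidef)
    (hRic : ∀ t, Γ' t = 4 • (Γ t * Qb t * Γ t) - Γ t * Bb t - (Bb t)ᵀ * Γ t)
    (hLyap : ∀ t, D' t + D t * (Bb t - 4 • (Qb t * Γ t))
      + (Bb t - 4 • (Qb t * Γ t))ᵀ * D t = -(2 • (1 : Matrix (Fin n) (Fin n) ℝ))) :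
    ∃ δ₀ > 0, ∀ δ : ℝ, 0 < δ → δ ≤ δ₀ → ∀ t,
      ((4 • ((Γ t + δ • D t) * Qb t * (Γ t + δ • D t)) - (Γ' t + δ • D' t)
          - (Γ t + δ • D t) * Bb t - (Bb t)ᵀ * (Γ t + δ • D t))
        - δ • (1 : Matrix (Fin n) (Fin n) ℝ)).PosSemidef ∧
      ((-δ) • (1 : Matrix (Fin n) (Fin n) ℝ)
        - (4 • ((Γ t - δ • D t) * Qb t * (Γ t - δ • D t)) - (Γ' t - δ • D' t)
            - (Γ t - δ • D t) * Bb t - (Bb t)ᵀ * (Γ t - δ • D t))).PosSemidef := by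
  -- continuity of the bound function
  have hDc : Continuous fun t => D t :=
    continuous_matrix fun i j =>
      continuous_iff_continuousAt.2 fun t => (hDderiv t i j).continuousAt
  have hQc : Continuous fun t => Qb t := continuous_matrix hQcont
  have hEc : Continuous fun t => D t * Qb t * D t := (hDc.matrix_mul hQc).matrix_mul hDc
  set g : ℝ → ℝ := fun t => ∑ i, ∑ j, |(D t * Qb t * D t) i j| with hg
  have hgc : Continuous g := by
    refine continuous_finset_sum _ fun i _ => continuous_finset_sum _ fun j _ => ?_
    exact ((continuous_apply j).comp ((continuous_apply i).comp hEc)).abs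
  have hgnonneg : ∀ t, 0 ≤ g t :=
    fun t => Finset.sum_nonneg fun i _ => Finset.sum_nonneg fun j _ => abs_nonneg _
  have hgper : Function.Periodic g P := by
    intro t
    simp only [hg, hDper t, hQper t]
  obtain ⟨t₀, ht₀, hmax⟩ := (isCompact_Icc (a := (0:ℝ)) (b := P)).exists_isMaxOn
    ⟨0, Set.left_mem_Icc.2 hP.le⟩ hgc.continuousOn
  set K := g t₀ with hK
  have hK0 : 0 ≤ K := hgnonneg t₀
  have hKall : ∀ t, g t ≤ K := by
    intro t
    obtain ⟨s, hs, hts⟩ := hgper.exists_mem_Ico₀ hP t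
    rw [hts]
    exact hmax ⟨hs.1, hs.2.le⟩
  refine ⟨(4 * K + 1)⁻¹, by positivity, fun δ hδ hδ₀ t => ?_⟩
  have hδK : δ * (4 * K + 1) ≤ 1 := by
    have h1 : (0:ℝ) < 4 * K + 1 := by linarith
    calc δ * (4 * K + 1) ≤ (4 * K + 1)⁻¹ * (4 * K + 1) :=
          mul_le_mul_of_nonneg_right hδ₀ h1.le
      _ = 1 := inv_mul_cancel₀ h1.ne'
  obtain ⟨hid1, hid2⟩ := riccati_expand (Qb t) (Bb t) (Γ t) (D t) (Γ' t) (D' t)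
    (hQsym t) (hΓsym t) (hRic t) (hLyap t) δ
  have hEsym : (D t * Qb t * D t)ᵀ = D t * Qb t * D t := by
    rw [Matrix.transpose_mul, Matrix.transpose_mul, (hQsym t).eq, (hDsym t).eq,
      Matrix.mul_assoc]
  have hqf : ∀ x : Fin n → ℝ, |x ⬝ᵥ (D t * Qb t * D t) *ᵥ x| ≤ K * (x ⬝ᵥ x) := by
    intro x
    have h1 := quad_bound (D t * Qb t * D t) x
    have h2 : x ⬝ᵥ x = ∑ i, x i * x i := rfl
    have hxx : 0 ≤ x ⬝ᵥ x := by
      rw [h2]; exact Finset.sum_nonneg fun i _ => mul_self_nonneg _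
    calc |x ⬝ᵥ (D t * Qb t * D t) *ᵥ x| ≤ g t * (x ⬝ᵥ x) := by rw [hg]; exact h1
      _ ≤ K * (x ⬝ᵥ x) := mul_le_mul_of_nonneg_right (hKall t) hxx
  constructor
  · rw [hid1]
    refine psd_aux _ (by simp [Matrix.transpose_add, Matrix.transpose_smul,
      Matrix.transpose_one, hEsym]) fun x => ?_
    have hb := hqf x
    have hxx : (0:ℝ) ≤ x ⬝ᵥ x := Finset.sum_nonneg fun i _ => mul_self_nonneg _
    have hexp : x ⬝ᵥ (δ • (1 : Matrix (Fin n) (Fin n) ℝ) + (4 * δ^2) • (D t * Qb t * D t)) *ᵥ x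
        = δ * (x ⬝ᵥ x) + (4 * δ^2) * (x ⬝ᵥ (D t * Qb t * D t) *ᵥ x) := by
      simp [Matrix.add_mulVec, Matrix.smul_mulVec, Matrix.one_mulVec,
        dotProduct_add, dotProduct_smul, smul_eq_mul]
    rw [hexp]
    obtain ⟨hb1, hb2⟩ := abs_le.mp hb
    nlinarith [mul_nonneg hδ.le hxx, sq_nonneg δ, mul_nonneg (mul_nonneg hδ.le hδ.le) hxx]
  · rw [hid2]
    refine psd_aux _ (by simp [Matrix.transpose_sub, Matrix.transpose_smul,
      Matrix.transpose_one, hEsym]) fun x => ?_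
    have hb := hqf x
    have hxx : (0:ℝ) ≤ x ⬝ᵥ x := Finset.sum_nonneg fun i _ => mul_self_nonneg _
    have hexp : x ⬝ᵥ (δ • (1 : Matrix (Fin n) (Fin n) ℝ) - (4 * δ^2) • (D t * Qb t * D t)) *ᵥ x
        = δ * (x ⬝ᵥ x) - (4 * δ^2) * (x ⬝ᵥ (D t * Qb t * D t) *ᵥ x) := by
      simp [Matrix.sub_mulVec, Matrix.smul_mulVec, Matrix.one_mulVec,
        dotProduct_sub, dotProduct_smul, smul_eq_mul]
    rw [hexp]
    obtain ⟨hb1, hb2⟩ := abs_le.mp hb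
    nlinarith [mul_nonneg hδ.le hxx, sq_nonneg δ, mul_nonneg (mul_nonneg hδ.le hδ.le) hxx]
end
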